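/- Let k be a Gaussian integer with nonzero real part and nonzero imaginary part. Then |k+1|/|k-1| is irrational. -/

import Mathlib

open GaussianInt

theorem abs_ratio_irrational (k : GaussianInt) (hre : k.re ≠ 0) (him : k.im ≠ 0) :
    Irrational (‖((k + 1 : GaussianInt) : ℂ)‖ / ‖((k - 1 : GaussianInt) : ℂ)‖) := by
  rintro ⟨q, hq⟩
  obtain ⟨a, b⟩ := k
  simp only [Zsqrtd.re, Zsqrtd.im] at hre him
  have ha2 : 1 ≤ a ^ 2 := by
    have h : 0 < a ^ 2 := lt_of_le_of_ne (sq_nonneg a) (Ne.symm (pow_ne_zero 2 hre))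
    linarith
  have hb2 : 1 ≤ b ^ 2 := by
    have h : 0 < b ^ 2 := lt_of_le_of_ne (sq_nonneg b) (Ne.symm (pow_ne_zero 2 him))
    linarith
  have hAB : (((⟨a, b⟩ : GaussianInt) + 1 : GaussianInt) : ℂ) = Complex.mk ((a : ℝ) + 1) (b : ℝ) := by
    apply Complex.ext <;>
      simp [GaussianInt.toComplex_def, Zsqrtd.re_add, Zsqrtd.im_add]
  have hAB' : (((⟨a, b⟩ : GaussianInt) - 1 : GaussianInt) : ℂ) = Complex.mk ((a : ℝ) - 1) (b : ℝ) := by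
    apply Complex.ext <;>
      simp [GaussianInt.toComplex_def, Zsqrtd.re_sub, Zsqrtd.im_sub]
  have hA2 : ‖(((⟨a, b⟩ : GaussianInt) + 1 : GaussianInt) : ℂ)‖ ^ 2
      = (((a + 1) ^ 2 + b ^ 2 : ℤ) : ℝ) := by
    rw [Complex.sq_norm, hAB, Complex.normSq_mk]
    push_cast; ring
  have hB2 : ‖(((⟨a, b⟩ : GaussianInt) - 1 : GaussianInt) : ℂ)‖ ^ 2
      = (((a - 1) ^ 2 + b ^ 2 : ℤ) : ℝ) := by
    rw [Complex.sq_norm, hAB', Complex.normSq_mk]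
    push_cast; ring
  have hMpos : (0 : ℤ) < (a - 1) ^ 2 + b ^ 2 := by nlinarith [sq_nonneg (a - 1)]
  have hBpos : (0 : ℝ) < ‖(((⟨a, b⟩ : GaussianInt) - 1 : GaussianInt) : ℂ)‖ := by
    have h0 : (0 : ℝ) ^ 2 < ‖(((⟨a, b⟩ : GaussianInt) - 1 : GaussianInt) : ℂ)‖ ^ 2 := by
      rw [hB2]; norm_num; exact_mod_cast hMpos
    exact lt_of_pow_lt_pow_left₀ 2 (norm_nonneg _) h0
  have hA : ‖(((⟨a, b⟩ : GaussianInt) + 1 : GaussianInt) : ℂ)‖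
      = q * ‖(((⟨a, b⟩ : GaussianInt) - 1 : GaussianInt) : ℂ)‖ := by
    rw [eq_div_iff hBpos.ne'] at hq
    linarith [hq]
  have hNMreal : ((((a + 1) ^ 2 + b ^ 2 : ℤ)) : ℝ) = (q : ℝ) ^ 2 * (((a - 1) ^ 2 + b ^ 2 : ℤ) : ℝ) := by
    rw [← hA2, ← hB2, hA]; ring
  have hNMrat : ((((a + 1) ^ 2 + b ^ 2 : ℤ)) : ℚ) = q ^ 2 * (((a - 1) ^ 2 + b ^ 2 : ℤ) : ℚ) := by
    exact_mod_cast hNMreal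
  set r : ℚ := q * (((a - 1) ^ 2 + b ^ 2 : ℤ) : ℚ) with hrdef
  have hr2 : r * r = ((((a + 1) ^ 2 + b ^ 2) * ((a - 1) ^ 2 + b ^ 2) : ℤ) : ℚ) := by
    rw [hrdef]; push_cast; push_cast at hNMrat; nlinarith [hNMrat]
  have hden : r.den = 1 := by
    have h1 : (r * r).den = r.den * r.den := Rat.mul_self_den r
    rw [hr2, Rat.den_intCast] at h1
    exact Nat.eq_one_of_mul_eq_one_left h1.symm
  have hrint : (r.num : ℚ) = r := by
    have h := Rat.num_div_den r
    rw [hden] at h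
    simpa using h
  have ht2 : r.num ^ 2 = ((a + 1) ^ 2 + b ^ 2) * ((a - 1) ^ 2 + b ^ 2) := by
    have : ((r.num : ℚ)) ^ 2 = ((((a + 1) ^ 2 + b ^ 2) * ((a - 1) ^ 2 + b ^ 2) : ℤ) : ℚ) := by
      rw [hrint, sq]; exact hr2
    exact_mod_cast this
  set t : ℤ := r.num with htdef
  have ht2' : t ^ 2 = (a ^ 2 + b ^ 2 + 1) ^ 2 - 4 * a ^ 2 := by rw [ht2]; ring
  have ht2'' : t ^ 2 = (a ^ 2 + b ^ 2 - 1) ^ 2 + 4 * b ^ 2 := by rw [ht2']; ring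
  have h1 : |t| < a ^ 2 + b ^ 2 + 1 := by
    have : |t| ^ 2 < (a ^ 2 + b ^ 2 + 1) ^ 2 := by rw [sq_abs, ht2']; nlinarith
    exact lt_of_pow_lt_pow_left₀ 2 (by linarith) this
  have h2 : a ^ 2 + b ^ 2 - 1 < |t| := by
    have : (a ^ 2 + b ^ 2 - 1) ^ 2 < |t| ^ 2 := by rw [sq_abs, ht2'']; nlinarith
    exact lt_of_pow_lt_pow_left₀ 2 (abs_nonneg t) this
  have habs : |t| = a ^ 2 + b ^ 2 := by omega
  have hfin : (a ^ 2 + b ^ 2) ^ 2 = (a ^ 2 + b ^ 2 + 1) ^ 2 - 4 * a ^ 2 := by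
    rw [← sq_abs t, habs] at ht2'
    exact ht2'
  have hpar : 4 * a ^ 2 = 2 * (a ^ 2 + b ^ 2) + 1 := by nlinarith [hfin]
  have : 2 * a ^ 2 = 2 * b ^ 2 + 1 := by linarith
  omega
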